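/- There exist infinitely many perfect squares N not divisible by 10 such that N = b·10^d + a for some perfect squares a and b, neither divisible by 10, where a has exactly d decimal digits. Precisely: for every natural number M there exists such an N with N > M. -/

import Mathlib

/-- Pell-type sequence: solutions of x² - 10 y² = 9, stepped by (19+6√10)⁵. -/
def pellSeq : ℕ → ℕ × ℕ
  | 0 => (7, 2)
  | n+1 =>
    ((pellSeq n).1 * 39480499 + (pellSeq n).2 * 124848300,
     (pellSeq n).1 * 12484830 + (pellSeq n).2 * 39480499)

lemma pellSeq_key (n : ℕ) :
    (pellSeq n).1 ^ 2 = 10 * (pellSeq n).2 ^ 2 + 9 ∧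
    ((pellSeq n).2 % 10 = 2 ∨ (pellSeq n).2 % 10 = 8) ∧
    n ≤ (pellSeq n).2 := by
  induction n with
  | zero => simp [pellSeq]
  | succ n ih =>
    obtain ⟨h1, h2, h3⟩ := ih
    set x := (pellSeq n).1 with hx
    set y := (pellSeq n).2 with hy
    have hstep : pellSeq (n+1) = (x * 39480499 + y * 124848300,
        x * 12484830 + y * 39480499) := rfl
    rw [hstep]
    refine ⟨?_, ?_, ?_⟩
    · have : (x * 39480499 + y * 124848300) ^ 2 =
          1558709801289001 * (x ^ 2) + 9858146366603400 * (x * y) +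
          15587098012890000 * (y ^ 2) := by ring
      have h2' : 10 * (x * 12484830 + y * 39480499) ^ 2 + 9 =
          1558709801289000 * (x ^ 2) + 9858146366603400 * (x * y) +
          15587098012890010 * (y ^ 2) + 9 := by ring
      rw [this, h2']
      nlinarith [h1]
    · have e : x * 12484830 + y * 39480499 = 10 * (x * 1248483 + y * 3948049) + 9 * y := by ring
      rw [e, Nat.mul_add_mod]
      omega
    · nlinarith [h1, h3]

theorem stmt_5 :
    ∀ M : ℕ, ∃ N : ℕ, N > M ∧ (∃ z, N = z ^ 2) ∧ ¬ (10 ∣ N) ∧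
      ∃ a b d : ℕ, (∃ u, a = u ^ 2) ∧ (∃ v, b = v ^ 2) ∧
        ¬ (10 ∣ a) ∧ ¬ (10 ∣ b) ∧
        10 ^ (d - 1) ≤ a ∧ a < 10 ^ d ∧
        N = b * 10 ^ d + a := by
  intro M
  obtain ⟨h1, h2, h3⟩ := pellSeq_key M
  set x := (pellSeq M).1
  set y := (pellSeq M).2
  refine ⟨x ^ 2, ?_, ⟨x, rfl⟩, ?_, 9, y ^ 2, 1, ⟨3, by norm_num⟩, ⟨y, rfl⟩,
    by norm_num, ?_, by norm_num, by norm_num, by rw [h1]; ring⟩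
  · nlinarith
  · rw [h1]; omega
  · have : y ^ 2 % 10 = 4 := by
      have := Nat.pow_mod y 2 10
      rcases h2 with h | h <;> rw [h] at this <;> omega
    omega
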